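/- For every $i \geq 0$, the ideal $J_i = \operatorname{ann}_S H^i(G, R)$ is a $\mathcal{P}^*$-invariant ideal of $S$, i.e., $\mathcal{P}^m(J_i) \subseteq J_i$ for all $m \geq 0$. -/

import Mathlib

set_option linter.unusedSectionVars false

open MvPolynomial

noncomputable section

variable (𝔽 : Type) [Field 𝔽] [Fintype 𝔽] [DecidableEq 𝔽] (d : ℕ)

/-- The polynomial ring `R = 𝔽_q[V] = Sym(V^*)`, realized as a polynomial ring in `d`
variables (the variables `X i` forming a basis of `V^*`). -/
abbrev PolyR := MvPolynomial (Fin d) 𝔽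

/-- The linear form in `V^* ⊆ R` with coefficient vector `c`. -/
def linForm (c : Fin d → 𝔽) : PolyR 𝔽 d := ∑ i, MvPolynomial.C (c i) * X i

/-- The action of `g ∈ GL(V)` on `R = Sym(V^*)`, induced by the (contragredient) action
of `GL(V)` on linear forms: the linear form with coefficient vector `c` is sent to the
linear form with coefficient vector `c ⬝ g⁻¹`. -/
def glAct (g : GL (Fin d) 𝔽) : PolyR 𝔽 d →ₐ[𝔽] PolyR 𝔽 d :=
  aeval fun i => linForm 𝔽 d fun j => ((g⁻¹ : GL (Fin d) 𝔽) : Matrix (Fin d) (Fin d) 𝔽) i j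

lemma glAct_one : glAct 𝔽 d 1 = AlgHom.id 𝔽 (PolyR 𝔽 d) := by
  apply MvPolynomial.algHom_ext
  intro i
  simp [glAct, linForm, Matrix.one_apply, apply_ite MvPolynomial.C, ite_mul,
    Finset.sum_ite_eq]

lemma glAct_mul (g h : GL (Fin d) 𝔽) :
    glAct 𝔽 d (g * h) = (glAct 𝔽 d g).comp (glAct 𝔽 d h) := by
  apply MvPolynomial.algHom_ext
  intro i
  simp only [glAct, aeval_X, AlgHom.comp_apply, linForm, map_sum, map_mul, aeval_C, aeval_X,
    mul_inv_rev, Units.val_mul, Matrix.mul_apply, algebraMap_eq, Finset.mul_sum, C_mul,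
    Finset.sum_mul]
  rw [Finset.sum_comm]
  simp [mul_assoc]

variable (G : Subgroup (GL (Fin d) 𝔽))

/-- The invariant ring `S = R^G`. -/
def invS : Subalgebra 𝔽 (PolyR 𝔽 d) :=
  ⨅ g ∈ G, AlgHom.equalizer (glAct 𝔽 d g) (AlgHom.id 𝔽 (PolyR 𝔽 d))

lemma mem_invS (r : PolyR 𝔽 d) : r ∈ invS 𝔽 d G ↔ ∀ g ∈ G, glAct 𝔽 d g r = r := by
  simp [invS, Algebra.mem_iInf, AlgHom.mem_equalizer]

/-- `R` as a representation of `G` over `S = R^G` (the `G`-action on `R` is `S`-linear). -/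
def invRep : Representation (invS 𝔽 d G) G (PolyR 𝔽 d) where
  toFun g :=
    { toFun := glAct 𝔽 d g
      map_add' := by simp
      map_smul' := by
        intro s r
        have hs : glAct 𝔽 d (g : GL (Fin d) 𝔽) (s : PolyR 𝔽 d) = (s : PolyR 𝔽 d) :=
          (mem_invS 𝔽 d G _).mp s.2 g g.2
        simp only [Algebra.smul_def, map_mul, RingHom.id_apply]
        rw [show (algebraMap (invS 𝔽 d G) (PolyR 𝔽 d)) s = (s : PolyR 𝔽 d) from rfl, hs] }
  map_one' := LinearMap.ext fun r => by
    show glAct 𝔽 d ((1 : G) : GL (Fin d) 𝔽) r = r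
    rw [OneMemClass.coe_one, glAct_one]
    rfl
  map_mul' := fun g h => LinearMap.ext fun r => by
    show glAct 𝔽 d ((g * h : G) : GL (Fin d) 𝔽) r = glAct 𝔽 d g (glAct 𝔽 d h r)
    rw [MulMemClass.coe_mul, glAct_mul]
    rfl

/-- The `i`-th group cohomology `H^i(G, R)`, as a module over `S = R^G`. -/
def cohGR (i : ℕ) : ModuleCat (invS 𝔽 d G) := groupCohomology (Rep.of (invRep 𝔽 d G)) i

/-- `J_i`, the annihilator of `H^i(G, R)` in `S`. -/
def annJ (i : ℕ) : Ideal (invS 𝔽 d G) := Module.annihilator (invS 𝔽 d G) (cohGR 𝔽 d G i)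

/-- The top Dickson class `𝐝_{d,0} = ∏_{0 ≠ v ∈ V^*} v ∈ R`. -/
def dickson : PolyR 𝔽 d := ∏ c ∈ Finset.univ.filter (fun c : Fin d → 𝔽 => c ≠ 0), linForm 𝔽 d c


lemma glAct_linForm (g : GL (Fin d) 𝔽) (c : Fin d → 𝔽) :
    glAct 𝔽 d g (linForm 𝔽 d c) =
      linForm 𝔽 d (Matrix.vecMul c ((g⁻¹ : GL (Fin d) 𝔽) : Matrix (Fin d) (Fin d) 𝔽)) := by
  simp only [glAct, linForm, map_sum, map_mul, aeval_C, aeval_X, algebraMap_eq,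
    Matrix.vecMul, dotProduct, map_sum, C_mul, Finset.mul_sum, Finset.sum_mul]
  rw [Finset.sum_comm]
  simp [mul_assoc]

lemma glAct_dickson (g : GL (Fin d) 𝔽) : glAct 𝔽 d g (dickson 𝔽 d) = dickson 𝔽 d := by
  unfold dickson
  rw [map_prod]
  simp only [glAct_linForm]
  refine Finset.prod_bij'
    (fun c _ => Matrix.vecMul c ((g⁻¹ : GL (Fin d) 𝔽) : Matrix (Fin d) (Fin d) 𝔽))
    (fun c _ => Matrix.vecMul c ((g : GL (Fin d) 𝔽) : Matrix (Fin d) (Fin d) 𝔽))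
    ?_ ?_ ?_ ?_ ?_
  · intro c hc
    simp only [Finset.mem_filter, Finset.mem_univ, true_and] at hc ⊢
    intro h0
    apply hc
    have h2 := congrArg
      (fun v => Matrix.vecMul v ((g : GL (Fin d) 𝔽) : Matrix (Fin d) (Fin d) 𝔽)) h0
    simp only [Matrix.vecMul_vecMul, Matrix.zero_vecMul, ← Units.val_mul, inv_mul_cancel,
      Units.val_one, Matrix.vecMul_one] at h2
    exact h2
  · intro c hc
    simp only [Finset.mem_filter, Finset.mem_univ, true_and] at hc ⊢
    intro h0
    apply hc
    have h2 := congrArg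
      (fun v => Matrix.vecMul v ((g⁻¹ : GL (Fin d) 𝔽) : Matrix (Fin d) (Fin d) 𝔽)) h0
    simp only [Matrix.vecMul_vecMul, Matrix.zero_vecMul, ← Units.val_mul, mul_inv_cancel,
      Units.val_one, Matrix.vecMul_one] at h2
    exact h2
  · intro c hc
    simp only [Matrix.vecMul_vecMul, ← Units.val_mul, inv_mul_cancel, Units.val_one,
      Matrix.vecMul_one]
  · intro c hc
    simp only [Matrix.vecMul_vecMul, ← Units.val_mul, mul_inv_cancel, Units.val_one,
      Matrix.vecMul_one]
  · intro c hc
    rfl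

/-- The top Dickson class as an element of the invariant ring `S = R^G`. -/
def dicksonS : invS 𝔽 d G :=
  ⟨dickson 𝔽 d, (mem_invS 𝔽 d G _).mpr fun g _ => glAct_dickson 𝔽 d g⟩

/-- The total Steenrod operation `P(ξ) : R → R[ξ]`, the `𝔽_q`-algebra homomorphism
determined by `P(ξ)(v) = v + v^q ξ` for linear forms `v` (here on the basis `X i`). -/
def steenrodTotal : PolyR 𝔽 d →ₐ[𝔽] Polynomial (PolyR 𝔽 d) :=
  aeval fun i =>
    Polynomial.C (X i) + Polynomial.C ((X i : PolyR 𝔽 d) ^ Fintype.card 𝔽) * Polynomial.X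

/-- The Steenrod reduced power operation `𝒫^m : R → R`, defined by
`P(ξ)(f) = ∑ᵢ 𝒫^i(f) ξ^i`. -/
def steenrodP (m : ℕ) (f : PolyR 𝔽 d) : PolyR 𝔽 d := (steenrodTotal 𝔽 d f).coeff m

lemma linForm_pow_card (c : Fin d → 𝔽) :
    (linForm 𝔽 d c) ^ Fintype.card 𝔽 =
      ∑ j, MvPolynomial.C (c j) * (X j : PolyR 𝔽 d) ^ Fintype.card 𝔽 := by
  obtain ⟨n, hp, hcard⟩ := FiniteField.card 𝔽 (ringChar 𝔽)
  haveI : Fact (ringChar 𝔽).Prime := ⟨hp⟩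
  haveI : ExpChar (PolyR 𝔽 d) (ringChar 𝔽) := .prime hp
  have h := map_sum (iterateFrobenius (PolyR 𝔽 d) (ringChar 𝔽) n)
    (fun i => MvPolynomial.C (c i) * X i) Finset.univ
  simp only [iterateFrobenius_def] at h
  rw [linForm, hcard, h]
  refine Finset.sum_congr rfl fun j _ => ?_
  rw [mul_pow, ← map_pow, ← hcard, FiniteField.pow_card]

lemma steenrodTotal_linForm (c : Fin d → 𝔽) :
    steenrodTotal 𝔽 d (linForm 𝔽 d c) =
      Polynomial.C (linForm 𝔽 d c) +
        Polynomial.C ((linForm 𝔽 d c) ^ Fintype.card 𝔽) * Polynomial.X := by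
  rw [linForm_pow_card]
  rw [linForm, map_sum]
  simp only [map_mul, steenrodTotal, aeval_C, aeval_X, MvPolynomial.algebraMap_eq,
    Polynomial.algebraMap_apply]
  simp only [mul_add, ← Polynomial.C_mul, Finset.sum_add_distrib, ← mul_assoc, ← Finset.sum_mul,
    ← map_sum]

/-- The total Steenrod operation commutes with the `GL(V)`-action (acting trivially on `ξ`,
i.e. coefficientwise on `R[ξ]`). -/
lemma map_glAct_steenrodTotal (g : GL (Fin d) 𝔽) (r : PolyR 𝔽 d) :
    Polynomial.map (glAct 𝔽 d g).toRingHom (steenrodTotal 𝔽 d r) =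
      steenrodTotal 𝔽 d (glAct 𝔽 d g r) := by
  have key : (Polynomial.mapAlgHom (glAct 𝔽 d g)).comp (steenrodTotal 𝔽 d) =
      (steenrodTotal 𝔽 d).comp (glAct 𝔽 d g) := by
    apply MvPolynomial.algHom_ext
    intro i
    simp only [AlgHom.comp_apply, steenrodTotal, aeval_X]
    rw [show (Polynomial.mapAlgHom (glAct 𝔽 d g))
          (Polynomial.C (X i) + Polynomial.C ((X i : PolyR 𝔽 d) ^ Fintype.card 𝔽) * Polynomial.X)
        = Polynomial.map (glAct 𝔽 d g).toRingHom
          (Polynomial.C (X i) + Polynomial.C ((X i : PolyR 𝔽 d) ^ Fintype.card 𝔽) * Polynomial.X)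
        from rfl]
    simp only [Polynomial.map_add, Polynomial.map_mul, Polynomial.map_C, Polynomial.map_X]
    show Polynomial.C (glAct 𝔽 d g (X i)) +
        Polynomial.C (glAct 𝔽 d g ((X i : PolyR 𝔽 d) ^ Fintype.card 𝔽)) * Polynomial.X =
      (steenrodTotal 𝔽 d) (glAct 𝔽 d g (X i))
    rw [map_pow, show glAct 𝔽 d g (X i) =
        linForm 𝔽 d fun j => ((g⁻¹ : GL (Fin d) 𝔽) : Matrix (Fin d) (Fin d) 𝔽) i j from
      aeval_X _ i]
    rw [steenrodTotal_linForm]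
  exact congrFun (congrArg (fun φ => φ.toFun) key) r

/-- The Steenrod operations preserve the invariant ring. -/
lemma steenrodP_mem_invS (G : Subgroup (GL (Fin d) 𝔽)) (m : ℕ) (s : PolyR 𝔽 d)
    (hs : s ∈ invS 𝔽 d G) : steenrodP 𝔽 d m s ∈ invS 𝔽 d G := by
  rw [mem_invS] at hs ⊢
  intro g hg
  have h1 := map_glAct_steenrodTotal 𝔽 d g s
  rw [hs g hg] at h1
  have h2 : glAct 𝔽 d g (steenrodP 𝔽 d m s) =
      (Polynomial.map (glAct 𝔽 d g).toRingHom (steenrodTotal 𝔽 d s)).coeff m := by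
    rw [Polynomial.coeff_map]
    rfl
  rw [h2, h1]
  rfl

/-- The Steenrod operation `𝒫^m` restricted to the invariant ring `S = R^G`. -/
def steenrodPS (m : ℕ) (s : invS 𝔽 d G) : invS 𝔽 d G :=
  ⟨steenrodP 𝔽 d m (s : PolyR 𝔽 d), steenrodP_mem_invS 𝔽 d G m _ s.2⟩

/-! ### Auxiliary lemmas for the main theorem -/

lemma steenrodP_add' (k : ℕ) (a b : PolyR 𝔽 d) :
    steenrodP 𝔽 d k (a + b) = steenrodP 𝔽 d k a + steenrodP 𝔽 d k b := by
  simp [steenrodP]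

lemma steenrodP_zero' (k : ℕ) : steenrodP 𝔽 d k 0 = 0 := by
  simp [steenrodP]

lemma steenrodP_neg' (k : ℕ) (a : PolyR 𝔽 d) :
    steenrodP 𝔽 d k (-a) = -steenrodP 𝔽 d k a := by
  simp [steenrodP]

/-- `steenrodP` bundled as an additive monoid hom. -/
def steenrodPA (k : ℕ) : PolyR 𝔽 d →+ PolyR 𝔽 d where
  toFun := steenrodP 𝔽 d k
  map_zero' := steenrodP_zero' 𝔽 d k
  map_add' := steenrodP_add' 𝔽 d k

lemma steenrodP_glAct (g : GL (Fin d) 𝔽) (k : ℕ) (x : PolyR 𝔽 d) :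
    glAct 𝔽 d g (steenrodP 𝔽 d k x) = steenrodP 𝔽 d k (glAct 𝔽 d g x) := by
  rw [show glAct 𝔽 d g (steenrodP 𝔽 d k x) =
      (Polynomial.map (glAct 𝔽 d g).toRingHom (steenrodTotal 𝔽 d x)).coeff k from
    (Polynomial.coeff_map _ _).symm, map_glAct_steenrodTotal]
  rfl

lemma steenrodP_zeroth (f : PolyR 𝔽 d) : steenrodP 𝔽 d 0 f = f := by
  unfold steenrodP
  induction f using MvPolynomial.induction_on with
  | C a => simp [steenrodTotal, Polynomial.algebraMap_apply]
  | add p q hp hq => rw [map_add, Polynomial.coeff_add, hp, hq]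
  | mul_X p i hp =>
      rw [map_mul, Polynomial.mul_coeff_zero, hp, steenrodTotal, aeval_X]
      simp

lemma steenrodP_mul' (m : ℕ) (a b : PolyR 𝔽 d) :
    steenrodP 𝔽 d m (a * b) =
      ∑ k ∈ Finset.range (m + 1), steenrodP 𝔽 d k a * steenrodP 𝔽 d (m - k) b := by
  unfold steenrodP
  rw [map_mul, Polynomial.coeff_mul, Finset.Nat.sum_antidiagonal_eq_sum_range_succ_mk]

lemma steenrodP_sum (k : ℕ) {ι : Type} (t : Finset ι) (F : ι → PolyR 𝔽 d) :
    steenrodP 𝔽 d k (∑ i ∈ t, F i) = ∑ i ∈ t, steenrodP 𝔽 d k (F i) :=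
  map_sum (steenrodPA 𝔽 d k) F t

set_option maxHeartbeats 1000000 in
set_option synthInstance.maxHeartbeats 400000 in
lemma steenrodP_sign_smul (k n : ℕ) (x : PolyR 𝔽 d) :
    steenrodP 𝔽 d k ((-1 : invS 𝔽 d G) ^ n • x) = (-1 : invS 𝔽 d G) ^ n • steenrodP 𝔽 d k x := by
  rcases neg_one_pow_eq_or (↥(invS 𝔽 d G)) n with h | h
  · rw [h, one_smul, one_smul]
  · rw [h, neg_one_smul, neg_one_smul, steenrodP_neg']

open groupCohomology in
/-- The complex of inhomogeneous cochains computing `H^*(G, R)`. -/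
def KK : CochainComplex (ModuleCat (invS 𝔽 d G)) ℕ :=
  inhomogeneousCochains (Rep.of (invRep 𝔽 d G))

/-- The Steenrod operation applied pointwise to cochains. -/
def lamX (k n : ℕ) (f : (Fin n → G) → PolyR 𝔽 d) : (Fin n → G) → PolyR 𝔽 d :=
  fun g => steenrodP 𝔽 d k (f g)

lemma d_lamX (k n : ℕ) (f : (Fin n → G) → PolyR 𝔽 d) :
    inhomogeneousCochains.d (Rep.of (invRep 𝔽 d G)) n (lamX 𝔽 d G k n f) =
      lamX 𝔽 d G k (n + 1) (inhomogeneousCochains.d (Rep.of (invRep 𝔽 d G)) n f) := by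
  have hρ : ∀ (x : PolyR 𝔽 d) (g' : G),
      (Rep.of (invRep 𝔽 d G)).ρ g' (steenrodP 𝔽 d k x) =
        steenrodP 𝔽 d k ((Rep.of (invRep 𝔽 d G)).ρ g' x) :=
    fun x g' => steenrodP_glAct 𝔽 d (g' : GL (Fin d) 𝔽) k x
  funext g
  show inhomogeneousCochains.d (Rep.of (invRep 𝔽 d G)) n (lamX 𝔽 d G k n f) g =
    steenrodP 𝔽 d k (inhomogeneousCochains.d (Rep.of (invRep 𝔽 d G)) n f g)
  rw [inhomogeneousCochains.d_hom_apply, inhomogeneousCochains.d_hom_apply, steenrodP_add',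
    steenrodP_sum]
  congr 1
  · exact hρ _ _
  · exact Finset.sum_congr rfl fun j _ => (steenrodP_sign_smul 𝔽 d G k _ _).symm

lemma KK_d_lamX (k n n' : ℕ) (f : (Fin n → G) → PolyR 𝔽 d) :
    (KK 𝔽 d G).d n n' (lamX 𝔽 d G k n f) = lamX 𝔽 d G k n' ((KK 𝔽 d G).d n n' f) := by
  by_cases h : n + 1 = n'
  · subst h
    rw [show (KK 𝔽 d G).d n (n + 1) = inhomogeneousCochains.d (Rep.of (invRep 𝔽 d G)) n from
      groupCohomology.inhomogeneousCochains.d_def _ n]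
    exact d_lamX 𝔽 d G k n f
  · rw [(KK 𝔽 d G).shape n n' h]
    have h0 : lamX 𝔽 d G k n' (0 : (Fin n' → G) → PolyR 𝔽 d) = 0 :=
      funext fun _ => steenrodP_zero' 𝔽 d k
    erw [LinearMap.zero_apply]
    exact h0.symm

open CategoryTheory in
/-- The short complex at degree `i`. -/
def SCi (i : ℕ) : ShortComplex (ModuleCat (invS 𝔽 d G)) := (KK 𝔽 d G).sc i

set_option maxHeartbeats 1000000 in
set_option synthInstance.maxHeartbeats 400000 in
lemma mem_annJ_iff (i : ℕ) (t : invS 𝔽 d G) :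
    t ∈ annJ 𝔽 d G i ↔
      ∀ z : LinearMap.ker (SCi 𝔽 d G i).g.hom,
        t • z ∈ LinearMap.range (SCi 𝔽 d G i).moduleCatToCycles := by
  have e := (SCi 𝔽 d G i).moduleCatHomologyIso
  rw [annJ, Module.mem_annihilator]
  constructor
  · intro h z
    have h3 := congrArg e.hom (h (e.inv (Submodule.Quotient.mk z)))
    erw [map_smul, map_zero] at h3
    rw [show e.hom (e.inv (Submodule.Quotient.mk z)) = Submodule.Quotient.mk z from
      CategoryTheory.Iso.inv_hom_id_apply e _] at h3
    erw [← Submodule.Quotient.mk_smul, Submodule.Quotient.mk_eq_zero] at h3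
    exact h3
  · intro h x
    obtain ⟨z, hz⟩ := Submodule.Quotient.mk_surjective _ (e.hom x)
    have h2 : t • (Submodule.Quotient.mk z :
        (SCi 𝔽 d G i).moduleCatLeftHomologyData.H) = 0 := by
      rw [← Submodule.Quotient.mk_smul, Submodule.Quotient.mk_eq_zero]
      exact h z
    rw [hz] at h2
    have h4 := congrArg e.inv h2
    erw [map_smul, map_zero, show e.inv (e.hom x) = x from CategoryTheory.Iso.hom_inv_id_apply e _] at h4
    exact h4

lemma invS_smul_def (t : invS 𝔽 d G) (x : PolyR 𝔽 d) : t • x = (t : PolyR 𝔽 d) * x := by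
  rw [Algebra.smul_def]; rfl

lemma steenrodPS_coe (k : ℕ) (s : invS 𝔽 d G) :
    (steenrodPS 𝔽 d G k s : PolyR 𝔽 d) = steenrodP 𝔽 d k (s : PolyR 𝔽 d) := rfl
set_option maxHeartbeats 1600000 in
set_option synthInstance.maxHeartbeats 800000 in
/-- **Proposition.** For every `i ≥ 0`, `J_i = ann_S H^i(G, R)` is a `𝒫^*`-invariant ideal
of `S`: `𝒫^m(J_i) ⊆ J_i` for all `m ≥ 0`. -/
theorem annJ_steenrod_invariant (i m : ℕ) (s : invS 𝔽 d G) (hs : s ∈ annJ 𝔽 d G i) :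
    steenrodPS 𝔽 d G m s ∈ annJ 𝔽 d G i := by
  induction m using Nat.strong_induction_on with
  | _ m ih =>
  rw [mem_annJ_iff]
  rw [mem_annJ_iff] at hs
  intro z
  obtain ⟨b, hb⟩ := hs z
  have hb' : (SCi 𝔽 d G i).f b = s • z.1 := congrArg Subtype.val hb
  have hzg : (KK 𝔽 d G).d i ((ComplexShape.up ℕ).next i) z.1 = 0 := LinearMap.mem_ker.mp z.2
  have hcocy : ∀ k' : ℕ,
      (KK 𝔽 d G).d i ((ComplexShape.up ℕ).next i) (lamX 𝔽 d G k' i z.1) = 0 := by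
    intro k'
    erw [KK_d_lamX, hzg]
    exact funext fun _ => steenrodP_zero' 𝔽 d k'
  have H : ∀ k : ℕ, k < m → ∃ b' : (Fin ((ComplexShape.up ℕ).prev i) → G) → PolyR 𝔽 d,
      (SCi 𝔽 d G i).f b' = (steenrodPS 𝔽 d G k s) • lamX 𝔽 d G (m - k) i z.1 := by
    intro k hk
    have h5 := (mem_annJ_iff 𝔽 d G i _).mp (ih k hk)
    obtain ⟨b', hb'⟩ :=
      h5 ⟨lamX 𝔽 d G (m - k) i z.1, LinearMap.mem_ker.mpr (hcocy (m - k))⟩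
    exact ⟨b', congrArg Subtype.val hb'⟩
  choose B hB using H
  refine ⟨lamX 𝔽 d G m ((ComplexShape.up ℕ).prev i) b -
    ∑ k ∈ (Finset.range m).attach, B k.1 (Finset.mem_range.mp k.2), Subtype.ext ?_⟩
  have hf1 : (SCi 𝔽 d G i).f (lamX 𝔽 d G m ((ComplexShape.up ℕ).prev i) b) =
      lamX 𝔽 d G m i ((SCi 𝔽 d G i).f b) := KK_d_lamX 𝔽 d G m _ i b
  show (SCi 𝔽 d G i).f _ = (steenrodPS 𝔽 d G m s) • z.1
  erw [map_sub, map_sum, hf1, hb',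
    show (∑ k ∈ (Finset.range m).attach, (SCi 𝔽 d G i).f (B k.1 (Finset.mem_range.mp k.2))) =
        ∑ k ∈ (Finset.range m).attach,
          (steenrodPS 𝔽 d G k.1 s) • lamX 𝔽 d G (m - k.1) i z.1 from
      Finset.sum_congr rfl fun k _ => hB k.1 (Finset.mem_range.mp k.2)]
  have hfinal : (lamX 𝔽 d G m i (s • z.1) -
      ∑ k ∈ (Finset.range m).attach, steenrodPS 𝔽 d G k.1 s • lamX 𝔽 d G (m - k.1) i z.1 :
        (Fin i → G) → PolyR 𝔽 d) =
      steenrodPS 𝔽 d G m s • (z.1 : (Fin i → G) → PolyR 𝔽 d) := by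
    have hpt : ∀ (t : invS 𝔽 d G) (f : (Fin i → G) → PolyR 𝔽 d) (g : Fin i → G),
        (t • f) g = (t : PolyR 𝔽 d) * f g := fun t f g => by
      rw [show (t • f) g = t • f g from rfl, invS_smul_def]
    funext g
    simp only [Pi.sub_apply, Finset.sum_apply, Pi.smul_apply, lamX, invS_smul_def, steenrodPS_coe]
    erw [hpt s z.1 g, hpt (steenrodPS 𝔽 d G m s) z.1 g, steenrodPS_coe]
    rw [steenrodP_mul', Finset.sum_range_succ, Nat.sub_self, steenrodP_zeroth,
      Finset.sum_attach (Finset.range m)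
        (fun k => steenrodP 𝔽 d k (s : PolyR 𝔽 d) * steenrodP 𝔽 d (m - k) (z.1 g)),
      add_sub_cancel_left]
  exact hfinal

end
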